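/- For a p×p symmetric positive definite matrix Σ = Λ⁻¹, the determinant of the Fisher information matrix of the multivariate normal model in the canonical parameterization φ = (ξ, vech(Λ)) with ξ = Λμ satisfies |J_{φφ}(φ)| = n^{p(p+3)/2} · 2^{-p} · |Λ|^{-(p+2)}, where J_{φφ}(φ) is the block matrix with blocks nΛ⁻¹, −n(ξ^TΛ⁻¹ ⊗ Λ⁻¹)D_p, −nD_p^T(Λ⁻¹ξ ⊗ Λ⁻¹), and (n/2)D_p^T{Λ⁻¹(I_p + 2ξξ^TΛ⁻¹) ⊗ Λ⁻¹}D_p. -/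

import Mathlib

open Matrix Kronecker

namespace FisherDet

variable {p : ℕ}

abbrev Idx (p : ℕ) := {ij : Fin p × Fin p // ij.2 ≤ ij.1}

def sortPair (ab : Fin p × Fin p) : Idx p :=
  if h : ab.2 ≤ ab.1 then ⟨ab, h⟩ else ⟨(ab.2, ab.1), le_of_not_ge h⟩

lemma sortPair_val (kl : Idx p) : sortPair kl.1 = kl := by
  obtain ⟨⟨i, j⟩, h⟩ := kl
  simp [sortPair, h]

lemma sortPair_swap (kl : Idx p) : sortPair (kl.1.2, kl.1.1) = kl := by
  obtain ⟨⟨i, j⟩, h⟩ := kl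
  by_cases h' : i ≤ j
  · have hij : i = j := le_antisymm h' h
    subst hij
    simp [sortPair]
  · simp [sortPair, h']

lemma sortPair_or (ab : Fin p × Fin p) :
    (sortPair ab).1 = ab ∨ (sortPair ab).1 = (ab.2, ab.1) := by
  unfold sortPair
  split <;> simp

lemma sortPair_eq_iff (ab : Fin p × Fin p) (kl : Idx p) :
    sortPair ab = kl ↔ (ab = kl.1 ∨ ab = (kl.1.2, kl.1.1)) := by
  constructor
  · rintro rfl
    rcases sortPair_or ab with h | h
    · exact Or.inl h.symm
    · right; rw [h]
  · rintro (h | h)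
    · rw [h, sortPair_val]
    · rw [h, sortPair_swap]

/-- The explicit duplication matrix. -/
def Dm (p : ℕ) : Matrix (Fin p × Fin p) (Idx p) ℝ :=
  fun ab kl => if sortPair ab = kl then 1 else 0

/-- The explicit elimination matrix. -/
def Lm (p : ℕ) : Matrix (Idx p) (Fin p × Fin p) ℝ :=
  fun kl ab => if ab = kl.1 then 1 else 0

lemma sum_ite_or_ne {α : Type*} [Fintype α] [DecidableEq α] {x y : α} (hxy : x ≠ y)
    (g : α → ℝ) :
    ∑ a, (if a = x ∨ a = y then g a else 0) = g x + g y := by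
  have h : ∀ a, (if a = x ∨ a = y then g a else 0)
      = (if a = x then g a else 0) + (if a = y then g a else 0) := by
    intro a
    by_cases h1 : a = x <;> by_cases h2 : a = y <;> simp_all
  simp only [h, Finset.sum_add_distrib]
  rw [Finset.sum_ite_eq' Finset.univ, Finset.sum_ite_eq' Finset.univ]
  simp

lemma sum_sortPair (kl : Idx p) (g : Fin p × Fin p → ℝ) :
    ∑ ab, (if sortPair ab = kl then g ab else 0)
      = g kl.1 + if kl.1.1 = kl.1.2 then 0 else g (kl.1.2, kl.1.1) := by
  by_cases hd : kl.1.1 = kl.1.2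
  · have h : ∀ ab : Fin p × Fin p, (sortPair ab = kl) = (ab = kl.1) := by
      intro ab
      have hswap : (kl.1.2, kl.1.1) = kl.1 := by
        rw [Prod.ext_iff]
        exact ⟨hd.symm, hd⟩
      rw [sortPair_eq_iff, hswap, or_self]
    simp only [h]
    rw [Finset.sum_ite_eq' Finset.univ]
    simp [hd]
  · have hne : kl.1 ≠ (kl.1.2, kl.1.1) := by
      intro h
      apply hd
      rw [Prod.ext_iff] at h
      rw [h.1]
    have h : ∀ ab : Fin p × Fin p,
        (sortPair ab = kl) = (ab = kl.1 ∨ ab = (kl.1.2, kl.1.1)) := by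
      intro ab; rw [sortPair_eq_iff]
    simp only [h]
    rw [sum_ite_or_ne hne g]
    simp [hd]



-- PART 2 starts here

def symFun (A : Matrix (Fin p) (Fin p) ℝ) (ab : Fin p × Fin p) (kl : Idx p) : ℝ :=
  A ab.1 kl.1.1 * A ab.2 kl.1.2 +
    if kl.1.1 = kl.1.2 then 0 else A ab.1 kl.1.2 * A ab.2 kl.1.1

/-- The matrix of `M ↦ A * M * Aᵀ` on the vech coordinates. -/
def symMap (A : Matrix (Fin p) (Fin p) ℝ) : Matrix (Idx p) (Idx p) ℝ :=
  fun ij kl => symFun A ij.1 kl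

lemma symFun_swap (A : Matrix (Fin p) (Fin p) ℝ) (ab : Fin p × Fin p) (kl : Idx p) :
    symFun A (ab.2, ab.1) kl = symFun A ab kl := by
  obtain ⟨⟨k, l⟩, hkl⟩ := kl
  unfold symFun
  dsimp only
  by_cases h : k = l
  · subst h
    simp only [if_pos rfl]
    ring
  · simp only [if_neg h]
    ring

lemma symMap_sortPair (A : Matrix (Fin p) (Fin p) ℝ) (ab : Fin p × Fin p) (kl : Idx p) :
    symMap A (sortPair ab) kl = symFun A ab kl := by
  unfold symMap
  rcases sortPair_or ab with h | h
  · rw [h]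
  · rw [h, symFun_swap]

lemma kron_mul_Dm (A : Matrix (Fin p) (Fin p) ℝ) :
    (A ⊗ₖ A) * Dm p = Dm p * symMap A := by
  ext ab kl
  rw [Matrix.mul_apply, Matrix.mul_apply]
  have hL : ∀ cd : Fin p × Fin p, (A ⊗ₖ A) ab cd * Dm p cd kl
      = if sortPair cd = kl then A ab.1 cd.1 * A ab.2 cd.2 else 0 := by
    intro cd
    unfold Dm
    rw [mul_ite, mul_one, mul_zero]
    rfl
  have hR : ∀ ij : Idx p, Dm p ab ij * symMap A ij kl
      = if sortPair ab = ij then symMap A ij kl else 0 := by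
    intro ij
    unfold Dm
    rw [ite_mul, one_mul, zero_mul]
  simp only [hL, hR]
  rw [sum_sortPair kl (fun cd => A ab.1 cd.1 * A ab.2 cd.2),
    Finset.sum_ite_eq Finset.univ, if_pos (Finset.mem_univ _), symMap_sortPair]
  rfl

lemma Lm_mul_Dm : Lm p * Dm p = 1 := by
  ext kl kl'
  rw [Matrix.mul_apply]
  unfold Lm Dm
  simp only [ite_mul, one_mul, zero_mul]
  rw [Finset.sum_ite_eq' Finset.univ, if_pos (Finset.mem_univ _), sortPair_val]
  by_cases h : kl = kl' <;> simp [Matrix.one_apply, h, eq_comm]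

lemma symMap_mul (A B : Matrix (Fin p) (Fin p) ℝ) :
    symMap (A * B) = symMap A * symMap B := by
  have h1 : Dm p * symMap (A * B) = Dm p * (symMap A * symMap B) := by
    rw [← kron_mul_Dm, Matrix.mul_kronecker_mul, Matrix.mul_assoc, kron_mul_Dm B,
      ← Matrix.mul_assoc, kron_mul_Dm A, Matrix.mul_assoc]
  calc symMap (A * B) = Lm p * Dm p * symMap (A * B) := by rw [Lm_mul_Dm, Matrix.one_mul]
    _ = Lm p * Dm p * (symMap A * symMap B) := by
        rw [Matrix.mul_assoc, h1, ← Matrix.mul_assoc]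
    _ = symMap A * symMap B := by rw [Lm_mul_Dm, Matrix.one_mul]

lemma Dm_t_Dm : (Dm p)ᵀ * Dm p
    = Matrix.diagonal (fun kl : Idx p => if kl.1.1 = kl.1.2 then 1 else 2) := by
  ext kl kl'
  rw [Matrix.mul_apply]
  simp only [Matrix.transpose_apply]
  unfold Dm
  have h : ∀ ab : Fin p × Fin p,
      (if sortPair ab = kl then (1:ℝ) else 0) * (if sortPair ab = kl' then 1 else 0)
      = if sortPair ab = kl then (if sortPair ab = kl' then (1:ℝ) else 0) else 0 := by
    intro ab
    rw [ite_mul, one_mul, zero_mul]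
  simp only [h]
  have h2 : ∀ ab, (if sortPair ab = kl then (if sortPair ab = kl' then (1:ℝ) else 0) else 0)
      = if sortPair ab = kl then (if kl = kl' then (1:ℝ) else 0) else 0 := by
    intro ab
    by_cases hc : sortPair ab = kl
    · simp [hc]
    · simp [hc]
  simp only [h2]
  rw [sum_sortPair kl (fun _ => if kl = kl' then (1:ℝ) else 0)]
  rw [Matrix.diagonal_apply]
  by_cases hkk : kl = kl'
  · subst hkk
    by_cases hd : kl.1.1 = kl.1.2 <;> simp [hd] <;> norm_num
  · by_cases hd : kl.1.1 = kl.1.2 <;> simp [hkk, hd]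

lemma Dt_kron_Dm (A : Matrix (Fin p) (Fin p) ℝ) :
    (Dm p)ᵀ * (A ⊗ₖ A) * Dm p = ((Dm p)ᵀ * Dm p) * symMap A := by
  rw [Matrix.mul_assoc, kron_mul_Dm, ← Matrix.mul_assoc]



def idxKey (kl : Idx p) : ℕ := kl.1.1 * p + kl.1.2

lemma key_lt_key {P a c : ℕ} {b d : ℕ} (hb : b < P) (hd : d < P) :
    a * P + b < c * P + d ↔ (a < c ∨ (a = c ∧ b < d)) := by
  constructor
  · intro h
    rcases lt_trichotomy a c with h1 | h1 | h1
    · exact Or.inl h1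
    · subst h1
      exact Or.inr ⟨rfl, lt_of_add_lt_add_left h⟩
    · exfalso
      have h3 : (c + 1) * P ≤ a * P := Nat.mul_le_mul_right P (Nat.succ_le_of_lt h1)
      have h2 : c * P + d < a * P + b := by nlinarith
      omega
  · rintro (h1 | ⟨rfl, h1⟩)
    · have h3 : (a + 1) * P ≤ c * P := Nat.mul_le_mul_right P (Nat.succ_le_of_lt h1)
      nlinarith
    · omega

lemma idxKey_inj : Function.Injective (idxKey (p := p)) := by
  rintro ⟨⟨a, b⟩, h1⟩ ⟨⟨c, d⟩, h2⟩ h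
  unfold idxKey at h
  dsimp only at h
  have hb := b.isLt
  have hd := d.isLt
  have hac : (a : ℕ) = c := by
    rcases lt_trichotomy (a : ℕ) (c : ℕ) with h1' | h1' | h1'
    · exfalso
      have h3 : (a + 1) * p ≤ c * p := Nat.mul_le_mul_right p (Nat.succ_le_of_lt h1')
      nlinarith
    · exact h1'
    · exfalso
      have h3 : (c + 1) * p ≤ a * p := Nat.mul_le_mul_right p (Nat.succ_le_of_lt h1')
      nlinarith
  have hbd : (b : ℕ) = d := by
    rw [hac] at h
    exact Nat.add_left_cancel h
  have hac2 : (a : ℕ) = c ∧ (b : ℕ) = d := ⟨hac, hbd⟩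
  rename' hac2 => hac3
  apply Subtype.ext
  dsimp only
  rw [Prod.ext_iff]
  exact ⟨Fin.ext hac, Fin.ext hbd⟩

/-- order-carrying copy of `Idx p` -/
def IdxO (p : ℕ) := Idx p

instance : Fintype (IdxO p) := inferInstanceAs (Fintype (Idx p))
instance : DecidableEq (IdxO p) := inferInstanceAs (DecidableEq (Idx p))
noncomputable instance : LinearOrder (IdxO p) :=
  LinearOrder.lift' (fun kl : Idx p => idxKey kl) idxKey_inj

def idxEquiv (p : ℕ) : IdxO p ≃ Idx p := Equiv.refl (Idx p)

lemma idxO_lt_iff (x y : IdxO p) :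
    x < y ↔ idxKey (idxEquiv p x) < idxKey (idxEquiv p y) := Iff.rfl

lemma idxO_lt_iff' (x y : IdxO p) :
    x < y ↔ ((idxEquiv p x).1.1 < (idxEquiv p y).1.1 ∨
      ((idxEquiv p x).1.1 = (idxEquiv p y).1.1 ∧ (idxEquiv p x).1.2 < (idxEquiv p y).1.2)) := by
  rw [idxO_lt_iff]
  unfold idxKey
  rw [key_lt_key (idxEquiv p x).1.2.isLt (idxEquiv p y).1.2.isLt]
  simp only [Fin.lt_def, Fin.ext_iff]

/-- product over the lower-triangle index set -/
lemma prod_idx (d : Fin p → ℝ) :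
    ∏ kl : Idx p, (d kl.1.1 * d kl.1.2) = (∏ i, d i) ^ (p + 1) := by
  have h0 : ∏ kl : Idx p, (d kl.1.1 * d kl.1.2)
      = ∏ ab ∈ Finset.univ.filter (fun ab : Fin p × Fin p => ab.2 ≤ ab.1),
          (d ab.1 * d ab.2) := by
    rw [Finset.prod_subtype (Finset.univ.filter (fun ab : Fin p × Fin p => ab.2 ≤ ab.1))]
    intro ab
    simp
  rw [h0, Finset.prod_filter]
  rw [Fintype.prod_prod_type]
  have h1 : ∀ a b : Fin p, (if b ≤ a then d a * d b else 1)
      = (if b ≤ a then d a else 1) * (if b ≤ a then d b else 1) := by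
    intro a b
    by_cases h : b ≤ a <;> simp [h]
  simp only [h1, Finset.prod_mul_distrib]
  have h2 : ∀ a : Fin p, (∏ b : Fin p, if b ≤ a then d a else 1) = d a ^ ((a : ℕ) + 1) := by
    intro a
    rw [← Finset.prod_filter]
    rw [Finset.prod_const]
    congr 1
    have : Finset.univ.filter (fun b : Fin p => b ≤ a) = Finset.Iic a := by
      ext b; simp
    rw [this, Fin.card_Iic]
  have h3 : (∏ a : Fin p, ∏ b : Fin p, if b ≤ a then d b else 1)
      = ∏ b : Fin p, d b ^ (p - (b : ℕ)) := by
    rw [Finset.prod_comm]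
    refine Finset.prod_congr rfl fun b _ => ?_
    rw [← Finset.prod_filter, Finset.prod_const]
    congr 1
    have : Finset.univ.filter (fun a : Fin p => b ≤ a) = Finset.Ici b := by
      ext a; simp
    rw [this, Fin.card_Ici]
  rw [Finset.prod_congr rfl (fun a _ => h2 a), h3, ← Finset.prod_mul_distrib]
  rw [← Finset.prod_pow]
  refine Finset.prod_congr rfl fun a _ => ?_
  rw [← pow_add]
  congr 1
  have := a.isLt
  omega

lemma symMap_diag_lower (A : Matrix (Fin p) (Fin p) ℝ)
    (hA : ∀ i j : Fin p, i < j → A i j = 0) (kl : Idx p) :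
    symMap A kl kl = A kl.1.1 kl.1.1 * A kl.1.2 kl.1.2 := by
  unfold symMap symFun
  by_cases h : kl.1.1 = kl.1.2
  · rw [if_pos h, add_zero]
  · have hlt : kl.1.2 < kl.1.1 := lt_of_le_of_ne kl.2 fun hh => h hh.symm
    rw [if_neg h, hA kl.1.2 kl.1.1 hlt, mul_zero, add_zero]

lemma symMap_entry_zero (A : Matrix (Fin p) (Fin p) ℝ)
    (hA : ∀ i j : Fin p, i < j → A i j = 0) (x y : Idx p)
    (hxy : x.1.1 < y.1.1 ∨ (x.1.1 = y.1.1 ∧ x.1.2 < y.1.2)) :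
    symMap A x y = 0 := by
  unfold symMap symFun
  rcases hxy with h | ⟨h1, h2⟩
  · rw [hA x.1.1 y.1.1 h, zero_mul, zero_add]
    by_cases hd : y.1.1 = y.1.2
    · rw [if_pos hd]
    · rw [if_neg hd, hA x.1.2 y.1.1 (lt_of_le_of_lt x.2 h), mul_zero]
  · rw [hA x.1.2 y.1.2 h2, mul_zero, zero_add]
    by_cases hd : y.1.1 = y.1.2
    · rw [if_pos hd]
    · rw [if_neg hd]
      have hlt : x.1.2 < y.1.1 := by
        rcases lt_or_eq_of_le x.2 with hh | hh
        · rwa [h1] at hh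
        · exfalso
          have hy : y.1.2 ≤ y.1.1 := y.2
          rw [← h1, ← hh] at hy
          exact absurd h2 (not_lt.mpr hy)
      rw [hA x.1.2 y.1.1 hlt, mul_zero]

lemma det_symMap_lower (A : Matrix (Fin p) (Fin p) ℝ)
    (hA : ∀ i j : Fin p, i < j → A i j = 0) :
    (symMap A).det = A.det ^ (p + 1) := by
  rw [← Matrix.det_submatrix_equiv_self (idxEquiv p) (symMap A)]
  have htri : ((symMap A).submatrix (idxEquiv p) (idxEquiv p)).BlockTriangular
      OrderDual.toDual := by
    intro x y hlt
    have h' : x < y := OrderDual.toDual_lt_toDual.mp hlt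
    have h := (idxO_lt_iff' x y).mp h'
    exact symMap_entry_zero A hA _ _ h
  rw [Matrix.det_of_lowerTriangular _ htri]
  have hdA : A.BlockTriangular OrderDual.toDual := fun i j h => hA i j h
  rw [Matrix.det_of_lowerTriangular A hdA]
  have hdiag : ∀ x : IdxO p, ((symMap A).submatrix (idxEquiv p) (idxEquiv p)) x x
      = A (idxEquiv p x).1.1 (idxEquiv p x).1.1 * A (idxEquiv p x).1.2 (idxEquiv p x).1.2 :=
    fun x => symMap_diag_lower A hA (idxEquiv p x)
  rw [Finset.prod_congr rfl (fun x _ => hdiag x)]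
  exact (Equiv.prod_comp (idxEquiv p)
    (fun kl : Idx p => A kl.1.1 kl.1.1 * A kl.1.2 kl.1.2)).trans (prod_idx (fun i => A i i))



-- PART 4

/-- the number of strictly-lower-triangular index pairs -/
def offDiagCard (p : ℕ) : ℕ :=
  (Finset.univ.filter fun kl : Idx p => ¬ kl.1.1 = kl.1.2).card

lemma det_DtD : ((Dm p)ᵀ * Dm p).det = 2 ^ offDiagCard p := by
  rw [Dm_t_Dm, Matrix.det_diagonal, Finset.prod_ite, Finset.prod_const_one,
    Finset.prod_const, one_mul]
  rfl

lemma det_DtD_ne_zero : ((Dm p)ᵀ * Dm p).det ≠ 0 := by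
  rw [det_DtD]
  positivity

lemma card_diag : (Finset.univ.filter fun kl : Idx p => kl.1.1 = kl.1.2).card = p := by
  have h : (Finset.univ.filter fun kl : Idx p => kl.1.1 = kl.1.2).card
      = (Finset.univ : Finset (Fin p)).card := by
    refine Finset.card_bij' (fun kl _ => kl.1.1)
      (fun i _ => ⟨(i, i), le_refl i⟩) ?_ ?_ ?_ ?_
    · intro kl hkl
      exact Finset.mem_univ _
    · intro i _
      simp
    · intro kl hkl
      simp only [Finset.mem_filter] at hkl
      apply Subtype.ext
      rw [Prod.ext_iff]
      exact ⟨rfl, hkl.2⟩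
    · intro i _
      rfl
  rw [h, Finset.card_univ, Fintype.card_fin]

lemma card_idx_split : Fintype.card (Idx p) = offDiagCard p + p := by
  have h := Finset.card_filter_add_card_filter_not
    (s := (Finset.univ : Finset (Idx p))) (p := fun kl : Idx p => kl.1.1 = kl.1.2)
  have h2 : Fintype.card (Idx p) = (Finset.univ : Finset (Idx p)).card :=
    (Finset.card_univ).symm
  have h3 := card_diag (p := p)
  unfold offDiagCard
  omega

lemma two_mul_card_idx : 2 * Fintype.card (Idx p) = p * (p + 1) := by
  have h1 : Fintype.card (Idx p)
      = (Finset.univ.filter fun ab : Fin p × Fin p => ab.2 ≤ ab.1).card :=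
    Fintype.card_subtype _
  have h2 : ∀ a : Fin p, (∑ b : Fin p, if b ≤ a then 1 else 0) = (a : ℕ) + 1 := by
    intro a
    rw [Finset.sum_boole]
    have he : Finset.univ.filter (fun b : Fin p => b ≤ a) = Finset.Iic a := by
      ext b; simp
    rw [he, Fin.card_Iic]
    simp
  have hN : Fintype.card (Idx p) = ∑ i ∈ Finset.range p, (i + 1) := by
    rw [h1, Finset.card_filter, Fintype.sum_prod_type]
    rw [Finset.sum_congr rfl (fun a _ => h2 a)]
    exact Fin.sum_univ_eq_sum_range (fun i => i + 1) p
  have h4 : ∑ i ∈ Finset.range p, (i + 1) = (∑ i ∈ Finset.range p, i) + p := by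
    rw [Finset.sum_add_distrib, Finset.sum_const, Finset.card_range, smul_eq_mul, mul_one]
  cases p with
  | zero => rw [hN]; simp
  | succ q =>
    have h3 : (∑ i ∈ Finset.range (q + 1), i) * 2 = (q + 1) * q := by
      rw [Finset.sum_range_id_mul_two]
      simp
    have h5 : (q + 1) * q + 2 * (q + 1) = (q + 1) * (q + 1 + 1) := by ring
    omega

lemma det_symMap_transpose (A : Matrix (Fin p) (Fin p) ℝ) :
    (symMap Aᵀ).det = (symMap A).det := by
  have h1 : (Dm p)ᵀ * (Aᵀ ⊗ₖ Aᵀ) * Dm p = ((Dm p)ᵀ * (A ⊗ₖ A) * Dm p)ᵀ := by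
    rw [Matrix.transpose_mul, Matrix.transpose_mul, Matrix.transpose_transpose,
      Matrix.kroneckerMap_transpose, ← Matrix.mul_assoc]
  have h2 := congrArg Matrix.det h1
  rw [Matrix.det_transpose, Dt_kron_Dm, Dt_kron_Dm, Matrix.det_mul, Matrix.det_mul] at h2
  exact mul_left_cancel₀ det_DtD_ne_zero h2

lemma det_symMap_posdef (A : Matrix (Fin p) (Fin p) ℝ) (hA : A.PosDef) :
    (symMap A).det = A.det ^ (p + 1) := by
  have hwf : WellFoundedLT (Fin p) := inferInstance
  set Li : Matrix (Fin p) (Fin p) ℝ := @LDL.lowerInv ℝ _ (Fin p) _ hwf _ A _ hA with hLidef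
  set Di : Matrix (Fin p) (Fin p) ℝ := @LDL.diag ℝ _ (Fin p) _ hwf _ A _ hA with hDidef
  have hLi : ∀ i j : Fin p, i < j → Li i j = 0 :=
    fun i j h => @LDL.lowerInv_triangular ℝ _ (Fin p) _ hwf _ A _ hA i j h
  have hconj : Di = Li * A * Liᴴ := @LDL.diag_eq_lowerInv_conj ℝ _ (Fin p) _ hwf _ A _ hA
  have hH : Liᴴ = Liᵀ := by
    ext i j
    simp [Matrix.conjTranspose_apply]
  rw [hH] at hconj
  have hmul : symMap Di = symMap Li * symMap A * symMap Liᵀ := by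
    rw [hconj, symMap_mul, symMap_mul]
  have hdiagtri : ∀ i j : Fin p, i < j → Di i j = 0 := by
    intro i j h
    rw [hDidef]
    unfold LDL.diag Matrix.diagonal
    simp only [Matrix.of_apply]
    rw [if_neg (ne_of_lt h)]
  have hdet1 := congrArg Matrix.det hmul
  rw [Matrix.det_mul, Matrix.det_mul, det_symMap_lower _ hdiagtri,
    det_symMap_transpose, det_symMap_lower _ hLi] at hdet1
  have hdetconj := congrArg Matrix.det hconj
  rw [Matrix.det_mul, Matrix.det_mul, Matrix.det_transpose] at hdetconj
  have hconj2 : (@LDL.lower ℝ _ (Fin p) _ hwf _ A _ hA) * Di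
      * (@LDL.lower ℝ _ (Fin p) _ hwf _ A _ hA)ᴴ = A :=
    @LDL.lower_conj_diag ℝ _ (Fin p) _ hwf _ A _ hA
  have hdetA : A.det ≠ 0 := ne_of_gt hA.det_pos
  have hDid : Di.det ≠ 0 := by
    intro h0
    apply hdetA
    rw [← hconj2, Matrix.det_mul, Matrix.det_mul, h0]
    ring
  have hLd : Li.det ≠ 0 := by
    intro h0
    apply hDid
    rw [hdetconj, h0]
    ring
  rw [hdetconj] at hdet1
  have hgoal : (Li.det ^ (p + 1)) * (symMap A).det * (Li.det ^ (p + 1))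
      = (Li.det ^ (p + 1)) * A.det ^ (p + 1) * (Li.det ^ (p + 1)) := by
    rw [← hdet1]
    ring
  have hpow : (Li.det ^ (p + 1)) ≠ 0 := pow_ne_zero _ hLd
  exact mul_left_cancel₀ hpow (mul_right_cancel₀ hpow hgoal)


end FisherDet

open FisherDet in
/-- Determinant of the Fisher information matrix of the multivariate normal model in
the canonical parameterization: `|J_{φφ}(φ)| = n^{p(p+3)/2} 2^{-p} |Λ|^{-(p+2)}`. -/
theorem det_fisher_information {p n : ℕ} (hn : 0 < n)
    (Λ : Matrix (Fin p) (Fin p) ℝ) (hΛ : Λ.PosDef)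
    (ξ : Matrix (Fin p) (Fin 1) ℝ)
    (D : Matrix (Fin p × Fin p) {ij : Fin p × Fin p // ij.2 ≤ ij.1} ℝ)
    (hD : ∀ M : Matrix (Fin p) (Fin p) ℝ, M.IsSymm →
      D.mulVec (fun ij => M ij.val.1 ij.val.2) = fun ij => M ij.1 ij.2) :
    (Matrix.fromBlocks
        ((n : ℝ) • Λ⁻¹)
        ((-(n : ℝ)) • ((((ξ.transpose * Λ⁻¹) ⊗ₖ Λ⁻¹).submatrix
            (fun i : Fin p => ((0 : Fin 1), i)) id) * D))
        ((-(n : ℝ)) • (D.transpose * (((Λ⁻¹ * ξ) ⊗ₖ Λ⁻¹).submatrix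
            id (fun j : Fin p => ((0 : Fin 1), j)))))
        (((n : ℝ) / 2) • (D.transpose *
            ((Λ⁻¹ * (1 + (2 : ℝ) • (ξ * ξ.transpose * Λ⁻¹))) ⊗ₖ Λ⁻¹) * D))).det
      = (n : ℝ) ^ (p * (p + 3) / 2) * (2 : ℝ) ^ (-(p : ℤ)) * Λ.det ^ (-(p : ℤ) - 2) := by
  classical
  -- Step 1: identify D with the explicit duplication matrix
  have hDm : D = Dm p := by
    ext ab kl
    obtain ⟨⟨i, j⟩, hij⟩ := kl
    set M : Matrix (Fin p) (Fin p) ℝ :=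
      Matrix.of fun x y => if (x, y) = (i, j) ∨ (x, y) = (j, i) then (1:ℝ) else 0 with hMdef
    have hMsymm : M.IsSymm := by
      rw [Matrix.IsSymm]
      ext x y
      simp only [Matrix.transpose_apply, hMdef, Matrix.of_apply]
      have : ((y, x) = (i, j) ∨ (y, x) = (j, i)) ↔ ((x, y) = (i, j) ∨ (x, y) = (j, i)) := by
        simp only [Prod.ext_iff]
        tauto
      rw [if_congr this rfl rfl]
    have hvec : (fun kl' : Idx p => M kl'.1.1 kl'.1.2)
        = Pi.single (⟨(i, j), hij⟩ : Idx p) 1 := by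
      funext kl'
      obtain ⟨⟨k, l⟩, hkl⟩ := kl'
      rw [Pi.single_apply]
      simp only [hMdef, Matrix.of_apply]
      have hiff : ((k, l) = (i, j) ∨ (k, l) = (j, i))
          ↔ ((⟨(k, l), hkl⟩ : Idx p) = ⟨(i, j), hij⟩) := by
        rw [Subtype.ext_iff]
        constructor
        · rintro (h | h)
          · exact h
          · rw [Prod.ext_iff] at h
            have hk : k = j := h.1
            have hl : l = i := h.2
            have hlk : l ≤ k := hkl
            rw [hk, hl] at hlk
            have hij2 : i = j := le_antisymm hlk hij
            show (k, l) = (i, j)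
            rw [Prod.ext_iff]
            exact ⟨hk.trans hij2.symm, hl.trans hij2⟩
        · intro h; exact Or.inl h
      rw [if_congr hiff rfl rfl]
    have h := hD M hMsymm
    rw [hvec, Matrix.mulVec_single] at h
    have h2 := congrFun h ab
    simp only [MulOpposite.op_one, one_smul, Matrix.col_apply] at h2
    have hgoal : Dm p ab ⟨(i, j), hij⟩ = M ab.1 ab.2 := by
      simp only [Dm, hMdef, Matrix.of_apply]
      have hcond : (sortPair ab = (⟨(i, j), hij⟩ : Idx p))
          ↔ ((ab.1, ab.2) = (i, j) ∨ (ab.1, ab.2) = (j, i)) := by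
        rw [sortPair_eq_iff]
      rw [if_congr hcond rfl rfl]
    exact h2.trans hgoal.symm
  subst hDm
  -- Step 2: basic nonvanishing facts
  have hdΛ : Λ.det ≠ 0 := ne_of_gt hΛ.det_pos
  have hΛu : IsUnit Λ.det := isUnit_iff_ne_zero.mpr hdΛ
  have hn' : (n : ℝ) ≠ 0 := Nat.cast_ne_zero.mpr (Nat.pos_iff_ne_zero.mp hn)
  have hdetInv : Λ⁻¹.det = Λ.det⁻¹ := by
    rw [Matrix.det_nonsing_inv, Ring.inverse_eq_inv']
  have hInvDet : IsUnit ((n : ℝ) • Λ⁻¹).det := by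
    rw [Matrix.det_smul, hdetInv]
    exact isUnit_iff_ne_zero.mpr
      (mul_ne_zero (pow_ne_zero _ hn') (inv_ne_zero hdΛ))
  haveI : Invertible ((n : ℝ) • Λ⁻¹) := Matrix.invertibleOfIsUnitDet _ hInvDet
  rw [Matrix.det_fromBlocks₁₁]
  have hinvA : ⅟((n : ℝ) • Λ⁻¹) = (n : ℝ)⁻¹ • Λ := by
    apply invOf_eq_right_inv
    rw [Matrix.smul_mul, Matrix.mul_smul, smul_smul, Matrix.nonsing_inv_mul Λ hΛu,
      mul_inv_cancel₀ hn', one_smul]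
  rw [hinvA]
  -- Step 3: Schur complement simplification
  let e0 : Fin p ≃ Fin 1 × Fin p :=
    ⟨fun j => ((0 : Fin 1), j), fun x => x.2, fun j => rfl, fun x => by
      obtain ⟨z, j⟩ := x
      have hz : z = 0 := Subsingleton.elim z 0
      rw [hz]⟩
  have hfun1 : (fun j : Fin p => ((0 : Fin 1), j)) = ⇑e0 := rfl
  rw [hfun1]
  have hmid : (((Λ⁻¹ * ξ) ⊗ₖ Λ⁻¹).submatrix id ⇑e0) * Λ
        * (((ξ.transpose * Λ⁻¹) ⊗ₖ Λ⁻¹).submatrix ⇑e0 id)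
      = (Λ⁻¹ * ξ * (ξ.transpose * Λ⁻¹)) ⊗ₖ Λ⁻¹ := by
    have hY : Λ = ((1 : Matrix (Fin 1) (Fin 1) ℝ) ⊗ₖ Λ).submatrix ⇑e0 ⇑e0 := by
      ext a b
      show Λ a b = (1 : Matrix (Fin 1) (Fin 1) ℝ) 0 0 * Λ a b
      rw [Matrix.one_apply_eq, one_mul]
    calc (((Λ⁻¹ * ξ) ⊗ₖ Λ⁻¹).submatrix id ⇑e0) * Λ
          * (((ξ.transpose * Λ⁻¹) ⊗ₖ Λ⁻¹).submatrix ⇑e0 id)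
        = (((Λ⁻¹ * ξ) ⊗ₖ Λ⁻¹).submatrix id ⇑e0)
            * (((1 : Matrix (Fin 1) (Fin 1) ℝ) ⊗ₖ Λ).submatrix ⇑e0 ⇑e0)
            * (((ξ.transpose * Λ⁻¹) ⊗ₖ Λ⁻¹).submatrix ⇑e0 id) := by rw [← hY]
      _ = ((((Λ⁻¹ * ξ) ⊗ₖ Λ⁻¹) * ((1 : Matrix (Fin 1) (Fin 1) ℝ) ⊗ₖ Λ)).submatrix id ⇑e0)
            * (((ξ.transpose * Λ⁻¹) ⊗ₖ Λ⁻¹).submatrix ⇑e0 id) := by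
          rw [Matrix.submatrix_mul_equiv]
      _ = ((((Λ⁻¹ * ξ) ⊗ₖ Λ⁻¹) * ((1 : Matrix (Fin 1) (Fin 1) ℝ) ⊗ₖ Λ)
            * ((ξ.transpose * Λ⁻¹) ⊗ₖ Λ⁻¹)).submatrix id id) := by
          rw [Matrix.submatrix_mul_equiv]
      _ = ((Λ⁻¹ * ξ) ⊗ₖ Λ⁻¹) * ((1 : Matrix (Fin 1) (Fin 1) ℝ) ⊗ₖ Λ)
            * ((ξ.transpose * Λ⁻¹) ⊗ₖ Λ⁻¹) := by rw [Matrix.submatrix_id_id]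
      _ = (Λ⁻¹ * ξ * (1 : Matrix (Fin 1) (Fin 1) ℝ) * (ξ.transpose * Λ⁻¹))
            ⊗ₖ (Λ⁻¹ * Λ * Λ⁻¹) := by
          rw [Matrix.mul_kronecker_mul, Matrix.mul_kronecker_mul]
      _ = (Λ⁻¹ * ξ * (ξ.transpose * Λ⁻¹)) ⊗ₖ Λ⁻¹ := by
          rw [Matrix.mul_one, Matrix.nonsing_inv_mul Λ hΛu, Matrix.one_mul]
  have hCAB : ((-(n : ℝ)) • ((Dm p)ᵀ * (((Λ⁻¹ * ξ) ⊗ₖ Λ⁻¹).submatrix id ⇑e0)))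
        * ((n : ℝ)⁻¹ • Λ)
        * ((-(n : ℝ)) • ((((ξ.transpose * Λ⁻¹) ⊗ₖ Λ⁻¹).submatrix ⇑e0 id) * Dm p))
      = (n : ℝ) • ((Dm p)ᵀ * ((Λ⁻¹ * ξ * (ξ.transpose * Λ⁻¹)) ⊗ₖ Λ⁻¹) * Dm p) := by
    have hassoc : ((Dm p)ᵀ * (((Λ⁻¹ * ξ) ⊗ₖ Λ⁻¹).submatrix id ⇑e0)) * Λ
        * ((((ξ.transpose * Λ⁻¹) ⊗ₖ Λ⁻¹).submatrix ⇑e0 id) * Dm p)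
        = (Dm p)ᵀ * ((Λ⁻¹ * ξ * (ξ.transpose * Λ⁻¹)) ⊗ₖ Λ⁻¹) * Dm p := by
      rw [← hmid]
      simp only [Matrix.mul_assoc]
    simp only [Matrix.smul_mul, Matrix.mul_smul, smul_smul]
    rw [hassoc]
    congr 1
    field_simp
  rw [hCAB]
  have hTR : ((n : ℝ) / 2) • ((Dm p)ᵀ
          * ((Λ⁻¹ * (1 + (2 : ℝ) • (ξ * ξ.transpose * Λ⁻¹))) ⊗ₖ Λ⁻¹) * Dm p)
        - (n : ℝ) • ((Dm p)ᵀ * ((Λ⁻¹ * ξ * (ξ.transpose * Λ⁻¹)) ⊗ₖ Λ⁻¹) * Dm p)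
      = ((n : ℝ) / 2) • ((Dm p)ᵀ * (Λ⁻¹ ⊗ₖ Λ⁻¹) * Dm p) := by
    have hexp : Λ⁻¹ * (1 + (2 : ℝ) • (ξ * ξ.transpose * Λ⁻¹))
        = Λ⁻¹ + (2 : ℝ) • (Λ⁻¹ * ξ * (ξ.transpose * Λ⁻¹)) := by
      rw [Matrix.mul_add, Matrix.mul_one, Matrix.mul_smul]
      congr 2
      simp only [Matrix.mul_assoc]
    rw [hexp, Matrix.add_kronecker, Matrix.smul_kronecker]
    rw [Matrix.mul_add, Matrix.add_mul, Matrix.mul_smul, Matrix.smul_mul, smul_add,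
      smul_smul]
    have hc2 : (n : ℝ) / 2 * 2 = (n : ℝ) := by ring
    rw [hc2, add_sub_cancel_right]
  rw [hTR]
  -- Step 4: determinant computation
  have hA1pos : (Λ⁻¹).PosDef := Matrix.posDef_inv_iff.mpr hΛ
  rw [Dt_kron_Dm, Matrix.det_smul, Matrix.det_smul, Matrix.det_mul, det_DtD,
    det_symMap_posdef _ hA1pos, hdetInv, Fintype.card_fin]
  -- Step 5: numerics
  have hNm := card_idx_split (p := p)
  have hN2 := two_mul_card_idx (p := p)
  have hq : p * (p + 3) / 2 = p + Fintype.card (Idx p) := by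
    have hpp : p * (p + 3) = p * (p + 1) + 2 * p := by ring
    omega
  rw [hq]
  have h2p : (2 : ℝ) ^ (-(p : ℤ)) = ((2 : ℝ) ^ p)⁻¹ := by
    rw [_root_.zpow_neg, zpow_natCast]
  have hdp : Λ.det ^ (-(p : ℤ) - 2) = (Λ.det ^ (p + 2))⁻¹ := by
    have he : (-(p : ℤ) - 2) = -((p + 2 : ℕ) : ℤ) := by push_cast; ring
    rw [he, _root_.zpow_neg, zpow_natCast]
  rw [h2p, hdp, hNm]
  rw [div_pow]
  field_simp
  rw [one_div, inv_pow]
  field_simp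
  ring
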